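/- Let R be a commutative domain with identity of characteristic zero, and for a positive integer m let δ_m be the R-derivation on R[x1,x2] defined by δ_m = x1^m ∂/∂x1 + x2^m ∂/∂x2. Then the kernel of δ_m is exactly R, i.e. δ_m(P) = 0 for P ∈ R[x1,x2] implies P ∈ R. -/

import Mathlib

open MvPolynomial

lemma coeff_pderiv_aux {σ : Type*} [DecidableEq σ] {R : Type*} [CommSemiring R]
    (i : σ) (P : MvPolynomial σ R) (d : σ →₀ ℕ) :
    coeff d (pderiv i P) = ((d i + 1 : ℕ) : R) * coeff (d + Finsupp.single i 1) P := by
  induction P using MvPolynomial.induction_on' with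
  | add p q hp hq => simp [hp, hq, mul_add]
  | monomial s a =>
    rw [pderiv_monomial, coeff_monomial, coeff_monomial]
    by_cases hsd : s = d + Finsupp.single i 1
    · subst hsd
      simp [add_tsub_cancel_right, mul_comm]
    · rw [if_neg hsd]
      by_cases h2 : s - Finsupp.single i 1 = d
      · rw [if_pos h2]
        have hsi : s i = 0 := by
          by_contra hne
          apply hsd
          rw [← h2, tsub_add_cancel_of_le]
          rwa [Finsupp.single_le_iff, Nat.one_le_iff_ne_zero]
        simp [hsi]
      · simp [h2]

lemma fin2_repr (d : Fin 2 →₀ ℕ) :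
    d = Finsupp.single 0 (d 0) + Finsupp.single 1 (d 1) := by
  ext j
  fin_cases j <;> simp [Finsupp.single_apply]

/-- For a commutative domain R of characteristic zero and m ≥ 1, the kernel of
the derivation δₘ = x₁^m ∂/∂x₁ + x₂^m ∂/₂x₂ on R[x₁,x₂] is exactly R. -/
theorem kernel_delta_m_eq_constants
    (R : Type*) [CommRing R] [IsDomain R] [CharZero R] (m : ℕ) (hm : 0 < m)
    (P : MvPolynomial (Fin 2) R)
    (h : (X 0) ^ m * pderiv 0 P + (X 1) ^ m * pderiv 1 P = 0) :
    ∃ r : R, P = C r := by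
  classical
  set c : ℕ → ℕ → R := fun a b => coeff (Finsupp.single 0 a + Finsupp.single 1 b) P with hc
  have key : ∀ d : Fin 2 →₀ ℕ,
      coeff d ((X (0 : Fin 2)) ^ m * pderiv 0 P) + coeff d ((X (1 : Fin 2)) ^ m * pderiv 1 P) = 0 := by
    intro d; rw [← coeff_add, h, coeff_zero]
  -- coefficient of the operator applied to P
  have comp : ∀ (i : Fin 2) (d : Fin 2 →₀ ℕ),
      coeff d ((X i) ^ m * pderiv i P) =
        if m ≤ d i then ((d i - m + 1 : ℕ) : R) * coeff (d - Finsupp.single i m + Finsupp.single i 1) P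
        else 0 := by
    intro i d
    rw [X_pow_eq_monomial, coeff_monomial_mul']
    simp only [Finsupp.single_le_iff]
    split_ifs with hle
    · rw [coeff_pderiv_aux]
      have hti : (d - Finsupp.single i m) i = d i - m := by
        simp [Finsupp.tsub_apply]
      rw [hti, one_mul]
    · rfl
  -- the basic recurrence at exponent (a+m, b)
  have eq1 : ∀ a b : ℕ,
      ((a + 1 : ℕ) : R) * c (a+1) b
        + (if m ≤ b then ((b - m + 1 : ℕ) : R) * c (a+m) (b-m+1) else 0) = 0 := by
    intro a b
    have hk := key (Finsupp.single 0 (a+m) + Finsupp.single 1 b)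
    rw [comp, comp] at hk
    have e0 : ((Finsupp.single (0 : Fin 2) (a+m) + Finsupp.single 1 b : Fin 2 →₀ ℕ)) 0 = a + m := by
      simp [Finsupp.single_apply]
    have e1 : ((Finsupp.single (0 : Fin 2) (a+m) + Finsupp.single 1 b : Fin 2 →₀ ℕ)) 1 = b := by
      simp [Finsupp.single_apply]
    rw [e0, e1] at hk
    have d0 : Finsupp.single (0 : Fin 2) (a+m) + Finsupp.single 1 b - Finsupp.single 0 m
        + Finsupp.single 0 1 = Finsupp.single 0 (a+1) + Finsupp.single 1 b := by
      ext j; fin_cases j <;> simp [Finsupp.tsub_apply, Finsupp.single_apply]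
    have d1 : Finsupp.single (0 : Fin 2) (a+m) + Finsupp.single 1 b - Finsupp.single 1 m
        + Finsupp.single 1 1 = Finsupp.single 0 (a+m) + Finsupp.single 1 (b-m+1) := by
      ext j; fin_cases j <;> simp [Finsupp.tsub_apply, Finsupp.single_apply]
    rw [if_pos (by omega), d0, d1] at hk
    have ha : a + m - m + 1 = a + 1 := by omega
    rw [ha] at hk
    exact hk
  -- the basic recurrence at exponent (a, b+m)
  have eq2 : ∀ a b : ℕ,
      (if m ≤ a then ((a - m + 1 : ℕ) : R) * c (a-m+1) (b+m) else 0)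
        + ((b + 1 : ℕ) : R) * c a (b+1) = 0 := by
    intro a b
    have hk := key (Finsupp.single 0 a + Finsupp.single 1 (b+m))
    rw [comp, comp] at hk
    have e0 : ((Finsupp.single (0 : Fin 2) a + Finsupp.single 1 (b+m) : Fin 2 →₀ ℕ)) 0 = a := by
      simp [Finsupp.single_apply]
    have e1 : ((Finsupp.single (0 : Fin 2) a + Finsupp.single 1 (b+m) : Fin 2 →₀ ℕ)) 1 = b + m := by
      simp [Finsupp.single_apply]
    rw [e0, e1] at hk
    have d0 : Finsupp.single (0 : Fin 2) a + Finsupp.single 1 (b+m) - Finsupp.single 0 m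
        + Finsupp.single 0 1 = Finsupp.single 0 (a-m+1) + Finsupp.single 1 (b+m) := by
      ext j; fin_cases j <;> simp [Finsupp.tsub_apply, Finsupp.single_apply]
    have d1 : Finsupp.single (0 : Fin 2) a + Finsupp.single 1 (b+m) - Finsupp.single 1 m
        + Finsupp.single 1 1 = Finsupp.single 0 a + Finsupp.single 1 (b+1) := by
      ext j
      fin_cases j <;>
        simp [Finsupp.tsub_apply, Finsupp.single_apply, Finsupp.add_apply] <;> omega
    rw [d0, d1, if_pos (show m ≤ b + m by omega)] at hk
    have hb : b + m - m + 1 = b + 1 := by omega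
    rw [hb] at hk
    exact hk
  -- claim 1: coefficients with positive first index vanish
  have claim1 : ∀ b a : ℕ, c (a+1) b = 0 := by
    intro b
    induction b using Nat.strong_induction_on with
    | _ b ih =>
      intro a
      have h1 := eq1 a b
      by_cases hmb : m ≤ b
      · rcases eq_or_lt_of_le (show 1 ≤ m from hm) with hm1 | hm2
        · -- m = 1
          rw [if_pos hmb] at h1
          have hm1' : m = 1 := hm1.symm
          subst hm1'
          have : c (a+1) b = c (a + 1) (b - 1 + 1) := by congr 1 <;> omega
          rw [this] at h1 ⊢
          have hcomb : (((a+1 : ℕ) : R) + ((b - 1 + 1 : ℕ) : R)) * c (a+1) (b-1+1) = 0 := by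
            ring_nf; ring_nf at h1; linear_combination h1
          have hne : (((a+1 : ℕ) : R) + ((b - 1 + 1 : ℕ) : R)) ≠ 0 := by
            have : (((a+1 : ℕ) : R) + ((b - 1 + 1 : ℕ) : R)) = ((a + 1 + (b - 1 + 1) : ℕ) : R) := by
              push_cast; ring
            rw [this]
            exact Nat.cast_ne_zero.mpr (by omega)
          exact (mul_eq_zero.mp hcomb).resolve_left hne
        · -- m ≥ 2
          rw [if_pos hmb] at h1
          have hlt : b - m + 1 < b := by omega
          have hz : c (a+m) (b-m+1) = 0 := by
            have := ih (b - m + 1) hlt (a + m - 1)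
            have hh : a + m - 1 + 1 = a + m := by omega
            rwa [hh] at this
          rw [hz, mul_zero, add_zero] at h1
          have hne : ((a+1 : ℕ) : R) ≠ 0 := Nat.cast_ne_zero.mpr (by omega)
          exact (mul_eq_zero.mp h1).resolve_left hne
      · rw [if_neg hmb, add_zero] at h1
        have hne : ((a+1 : ℕ) : R) ≠ 0 := Nat.cast_ne_zero.mpr (by omega)
        exact (mul_eq_zero.mp h1).resolve_left hne
  -- claim 2: coefficients with positive second index vanish
  have claim2 : ∀ a b : ℕ, c a (b+1) = 0 := by
    intro a b
    have h2 := eq2 a b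
    have hfirst : (if m ≤ a then ((a - m + 1 : ℕ) : R) * c (a-m+1) (b+m) else 0) = 0 := by
      split_ifs with hma
      · have : c (a-m+1) (b+m) = c ((a-m)+1) (b+m) := rfl
        rw [this, claim1, mul_zero]
      · rfl
    rw [hfirst, zero_add] at h2
    have hne : ((b+1 : ℕ) : R) ≠ 0 := Nat.cast_ne_zero.mpr (by omega)
    exact (mul_eq_zero.mp h2).resolve_left hne
  refine ⟨coeff 0 P, ?_⟩
  ext d
  rw [coeff_C]
  by_cases hd : (0 : Fin 2 →₀ ℕ) = d
  · rw [if_pos hd, ← hd]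
  · rw [if_neg hd]
    have hrepr := fin2_repr d
    have : d 0 ≠ 0 ∨ d 1 ≠ 0 := by
      by_contra hcon
      push_neg at hcon
      apply hd
      ext j; fin_cases j <;> simp [hcon.1, hcon.2]
    rcases this with h0 | h1
    · have hcl := claim1 (d 1) (d 0 - 1)
      simp only [hc] at hcl
      have e : d 0 - 1 + 1 = d 0 := by omega
      rw [e] at hcl
      rw [fin2_repr d]
      exact hcl
    · have hcl := claim2 (d 0) (d 1 - 1)
      simp only [hc] at hcl
      have e : d 1 - 1 + 1 = d 1 := by omega
      rw [e] at hcl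
      rw [fin2_repr d]
      exact hcl
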